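/- arXiv:1306.6386 — 3 statements merged into one kernel-verified Lean document; each statement's English description precedes it below -/
import Mathlib

section
/- For dimension d=2, c>0, and n≥1, there exists a constant C such that for all x∈ℝ², ∫_{|x−y|<c/√n} |log|y|| dy ≤ C·( 1/n + |log|x||/n + (log n)/n · 1_{|x|<2c/√n} ). -/
open MeasureTheory Real
open Set Metric

local notation "E2" => EuclideanSpace ℝ (Fin 2)

lemma key_ptwise {R y : ℝ} (h0 : 0 < y) (hyR : y < R) :
    y * |Real.log y| ≤ |Real.log R| * y + R := by
  have hR : 0 < R := h0.trans hyR
  have h1 : Real.log y = Real.log R + Real.log (y / R) := by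
    rw [Real.log_div h0.ne' hR.ne']; ring
  have h2 : Real.log (R / y) ≤ R / y - 1 := Real.log_le_sub_one_of_pos (by positivity)
  have h3 : Real.log (y / R) = -Real.log (R / y) := by
    rw [← Real.log_inv]; congr 1; field_simp
  have h4 : 0 ≤ Real.log (R / y) := Real.log_nonneg (by rw [le_div_iff₀ h0]; linarith)
  have h5 : |Real.log y| ≤ |Real.log R| + (R / y - 1) := by
    rw [h1]
    refine (abs_add_le _ _).trans ?_
    rw [h3, abs_neg, abs_of_nonneg h4]
    linarith
  have h6 := mul_le_mul_of_nonneg_left h5 h0.le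
  have hy : y * (R / y - 1) = R - y := by field_simp
  nlinarith [abs_nonneg (Real.log R)]

lemma aux_integrable (F : ℝ → ℝ) (hF : Measurable F)
    (h : Integrable (fun y : ℝ => y * F y) (volume.restrict (Set.Ioi 0))) :
    Integrable (fun x : E2 => F ‖x‖) := by
  set μ : Measure E2 := volume with hμ
  have hdim : Module.finrank ℝ E2 = 2 := by simp
  have hD : Integrable (fun r : Set.Ioi (0:ℝ) => F r.1)
      (Measure.volumeIoiPow (Module.finrank ℝ E2 - 1)) := by
    rw [hdim]
    rw [Measure.volumeIoiPow, integrable_withDensity_iff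
      (by fun_prop) (Filter.Eventually.of_forall fun r => ENNReal.ofReal_lt_top)]
    have hmap := map_comap_subtype_coe (measurableSet_Ioi (a := (0:ℝ))) (volume : Measure ℝ)
    have := ((MeasurableEmbedding.subtype_coe measurableSet_Ioi).integrable_map_iff
      (g := fun y : ℝ => y * F y)).mp (by rwa [hmap])
    refine this.congr (Filter.Eventually.of_forall fun r => ?_)
    have hr : (0:ℝ) < r.1 := r.2
    simp [Function.comp, ENNReal.toReal_ofReal hr.le, mul_comm]
  have hC : Integrable (fun p : sphere (0:E2) 1 × Set.Ioi (0:ℝ) => F p.2.1)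
      (μ.toSphere.prod (Measure.volumeIoiPow (Module.finrank ℝ E2 - 1))) := by
    have hmeas : AEStronglyMeasurable (fun r : Set.Ioi (0:ℝ) => F r.1)
        (Measure.map Prod.snd (μ.toSphere.prod (Measure.volumeIoiPow (Module.finrank ℝ E2 - 1)))) :=
      (hF.comp measurable_subtype_coe).aestronglyMeasurable
    have := (integrable_map_measure hmeas measurable_snd.aemeasurable).mp ?_
    · exact this
    · rw [Measure.map_snd_prod]
      rw [integrable_smul_measure ?h0 ?htop]
      · exact hD
      case h0 =>
        rw [Measure.toSphere_apply_univ]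
        refine mul_ne_zero (by simp) ?_
        exact (measure_ball_pos μ 0 one_pos).ne'
      case htop => exact (measure_lt_top _ _).ne
  have hB : Integrable (fun x : ({(0:E2)}ᶜ : Set E2) => F ‖x.1‖) (μ.comap Subtype.val) := by
    have := (μ.measurePreserving_homeomorphUnitSphereProd.integrable_comp_emb
      (Homeomorph.measurableEmbedding _)
      (g := fun p : sphere (0:E2) 1 × Set.Ioi (0:ℝ) => F p.2.1)).mpr hC
    refine this.congr (Filter.Eventually.of_forall fun x => ?_)
    simp [Function.comp]
  have hmap := map_comap_subtype_coe
    (MeasurableSet.compl (measurableSet_singleton (0:E2))) μ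
  have := ((MeasurableEmbedding.subtype_coe
      (MeasurableSet.compl (measurableSet_singleton (0:E2)))).integrable_map_iff
      (g := fun x : E2 => F ‖x‖)).mpr hB
  rw [hmap, restrict_compl_singleton] at this
  exact this

lemma ind_eq (R : ℝ) : (fun y : ℝ => y * Set.indicator (Set.Iio R) (fun t => |Real.log t|) y)
    = Set.indicator (Set.Iio R) (fun y => y * |Real.log y|) := by
  funext y; by_cases h : y ∈ Set.Iio R <;> simp [Set.indicator_apply, h]

lemma intOn_Ioo {R : ℝ} (hR : 0 < R) :
    IntegrableOn (fun y : ℝ => y * |Real.log y|) (Set.Ioo 0 R) := by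
  apply Measure.integrableOn_of_bounded (M := |Real.log R| * R + R)
  · simp [Real.volume_Ioo]
  · exact (measurable_id.mul Real.measurable_log.abs).aestronglyMeasurable
  · rw [ae_restrict_iff' measurableSet_Ioo]
    refine Filter.Eventually.of_forall fun y hy => ?_
    have h1 := key_ptwise hy.1 hy.2
    have h2 : 0 ≤ y * |Real.log y| := mul_nonneg hy.1.le (abs_nonneg _)
    rw [Real.norm_eq_abs, abs_of_nonneg h2]
    nlinarith [abs_nonneg (Real.log R), hy.1, hy.2]

lemma int1d {R : ℝ} (hR : 0 < R) :
    Integrable (fun y : ℝ => y * (Set.indicator (Set.Iio R) (fun t => |Real.log t|) y))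
      (volume.restrict (Set.Ioi 0)) := by
  rw [ind_eq R, integrable_indicator_iff measurableSet_Iio, IntegrableOn,
    Measure.restrict_restrict measurableSet_Iio]
  have hset : Set.Iio R ∩ Set.Ioi 0 = Set.Ioo 0 R := by
    ext y; simp [Set.mem_Ioo, and_comm]
  rw [hset]
  exact intOn_Ioo hR

lemma integrableOn_ball_log {R : ℝ} (hR : 0 < R) :
    IntegrableOn (fun y : E2 => |Real.log ‖y‖|) (Metric.ball 0 R) := by
  have key := aux_integrable (Set.indicator (Set.Iio R) (fun t => |Real.log t|))
    (Real.measurable_log.abs.indicator measurableSet_Iio) (int1d hR)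
  rw [← integrable_indicator_iff measurableSet_ball]
  refine key.congr (Filter.Eventually.of_forall fun y => ?_)
  by_cases h : ‖y‖ < R <;>
    simp [Set.indicator_apply, mem_ball_zero_iff, Set.mem_Iio, h]

lemma ball_bound {R : ℝ} (hR : 0 < R) :
    ∫ y in Metric.ball (0:E2) R, |Real.log ‖y‖|
      ≤ (volume (Metric.ball (0:E2) 1)).toReal * (2 * (|Real.log R| * R^2 + R^2)) := by
  have hB0 : 0 ≤ (volume (Metric.ball (0:E2) 1)).toReal := ENNReal.toReal_nonneg
  set F : ℝ → ℝ := Set.indicator (Set.Iio R) (fun t => |Real.log t|) with hF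
  have h1 : ∫ y in Metric.ball (0:E2) R, |Real.log ‖y‖| = ∫ y : E2, F ‖y‖ := by
    rw [← integral_indicator measurableSet_ball]
    refine integral_congr_ae (Filter.Eventually.of_forall fun y => ?_)
    by_cases h : ‖y‖ < R <;>
      simp [hF, Set.indicator_apply, mem_ball_zero_iff, Set.mem_Iio, h]
  have h2 : ∫ y : E2, F ‖y‖
      = (Module.finrank ℝ E2) • (volume (Metric.ball (0:E2) 1)).toReal •
        ∫ y in Set.Ioi (0:ℝ), y ^ (Module.finrank ℝ E2 - 1) • F y :=
    integral_fun_norm_addHaar (volume : Measure E2) F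
  have hdim : Module.finrank ℝ E2 = 2 := by simp
  rw [h1, h2, hdim]
  have h3 : ∫ y in Set.Ioi (0:ℝ), y ^ (2 - 1) • F y = ∫ y in Set.Ioo (0:ℝ) R, y * |Real.log y| := by
    simp only [show (2 - 1 : ℕ) = 1 from rfl, pow_one, smul_eq_mul, hF]
    rw [ind_eq R, setIntegral_indicator measurableSet_Iio, Set.Ioi_inter_Iio]
  have h4 : ∫ y in Set.Ioo (0:ℝ) R, y * |Real.log y|
      ≤ ∫ y in Set.Ioo (0:ℝ) R, (|Real.log R| * y + R) := by
    refine setIntegral_mono_on (intOn_Ioo hR) ?_ measurableSet_Ioo fun y hy =>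
      key_ptwise hy.1 hy.2
    apply Measure.integrableOn_of_bounded (M := |Real.log R| * R + R)
    · simp [Real.volume_Ioo]
    · exact ((measurable_const.mul measurable_id).add measurable_const).aestronglyMeasurable
    · rw [ae_restrict_iff' measurableSet_Ioo]
      refine Filter.Eventually.of_forall fun y hy => ?_
      rw [Real.norm_eq_abs, abs_of_nonneg (add_nonneg (mul_nonneg (abs_nonneg _) hy.1.le) hR.le)]
      nlinarith [abs_nonneg (Real.log R), hy.1, hy.2]
  have h5 : ∫ y in Set.Ioo (0:ℝ) R, (|Real.log R| * y + R) = |Real.log R| * (R^2/2) + R * R := by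
    rw [← integral_Ioc_eq_integral_Ioo, ← intervalIntegral.integral_of_le hR.le]
    rw [intervalIntegral.integral_add ((intervalIntegral.intervalIntegrable_id).const_mul _)
      intervalIntegrable_const, intervalIntegral.integral_const_mul,
      integral_id, intervalIntegral.integral_const]
    simp
  have h6 : ∫ y in Set.Ioi (0:ℝ), y ^ (2 - 1) • F y ≤ |Real.log R| * (R^2/2) + R * R := by
    rw [h3]; linarith
  rw [nsmul_eq_mul, smul_eq_mul]
  push_cast at h6 ⊢
  nlinarith [mul_le_mul_of_nonneg_left h6 hB0, mul_nonneg (mul_nonneg hB0 (abs_nonneg (Real.log R))) (sq_nonneg R)]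

lemma far_final (B c n L l2 a : ℝ) (hB0 : 0 ≤ B) (hc : 0 < c) (hn : 1 ≤ n)
    (hL0 : 0 ≤ L) (hlog2 : 0 ≤ l2) (ha0 : 0 ≤ a) :
    (L + l2) * (c^2/n * B) ≤ (B*c^2*(l2+1) + 18*B*c^2*(a+1) + 1) * (1/n + L/n) := by
  have hn0 : (0:ℝ) < n := lt_of_lt_of_le one_pos hn
  have hK : (0:ℝ) ≤ B * c^2 := by positivity
  rw [show (L + l2) * (c^2/n * B) = ((L+l2)*c^2*B)/n from by ring,
    show (B*c^2*(l2+1) + 18*B*c^2*(a+1) + 1) * (1/n + L/n)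
      = ((B*c^2*(l2+1) + 18*B*c^2*(a+1) + 1)*(1+L))/n from by ring,
    div_le_div_iff_of_pos_right hn0]
  nlinarith [mul_nonneg (mul_nonneg hK hlog2) hL0, mul_nonneg hK hL0,
    mul_nonneg (mul_nonneg hK ha0) hL0]

/-- For `d = 2`, `c > 0`, `n ≥ 1`:
`∫_{|x-y| < c/√n} |log|y|| dy ≤ C (1/n + |log|x||/n + (log n)/n · 1_{|x| < 2c/√n})`. -/
theorem stmt2 (c : ℝ) (hc : 0 < c) :
    ∃ C : ℝ, 0 < C ∧ ∀ n : ℝ, 1 ≤ n → ∀ x : EuclideanSpace ℝ (Fin 2),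
      (∫ y in Metric.ball x (c / Real.sqrt n), |Real.log ‖y‖|)
        ≤ C * (1 / n + |Real.log ‖x‖| / n
            + (if ‖x‖ < 2 * c / Real.sqrt n then Real.log n / n else 0)) := by
  classical
  set B := (volume (Metric.ball (0:E2) 1)).toReal with hBdef
  have hB0 : 0 ≤ B := ENNReal.toReal_nonneg
  have hlog2 : 0 ≤ Real.log 2 := Real.log_nonneg one_le_two
  have ha0 : 0 ≤ |Real.log (3*c)| := abs_nonneg _
  have hK : 0 ≤ B * c^2 := mul_nonneg hB0 (sq_nonneg c)
  refine ⟨B*c^2*(Real.log 2 + 1) + 18*B*c^2*(|Real.log (3*c)| + 1) + 1, by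
    nlinarith [mul_nonneg hK (by linarith : (0:ℝ) ≤ Real.log 2 + 1),
     mul_nonneg hK (by linarith : (0:ℝ) ≤ |Real.log (3*c)| + 1)], ?_⟩
  intro n hn x
  set s := Real.sqrt n with hsdef
  have hn0 : 0 < n := lt_of_lt_of_le one_pos hn
  have hs1 : (1:ℝ) ≤ s := by
    rw [hsdef, show (1:ℝ) = Real.sqrt 1 by simp]
    exact Real.sqrt_le_sqrt hn
  have hs0 : 0 < s := lt_of_lt_of_le one_pos hs1
  have hs2 : s^2 = n := Real.sq_sqrt hn0.le
  have hr0 : 0 < c / s := by positivity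
  have hlogn : 0 ≤ Real.log n := Real.log_nonneg hn
  have hlogs : Real.log s = Real.log n / 2 := Real.log_sqrt hn0.le
  set L := |Real.log ‖x‖| with hLdef
  have hL0 : 0 ≤ L := abs_nonneg _
  have hun : 0 < 1/n := by positivity
  have hvn : 0 ≤ Real.log n / n := by positivity
  have hLn : 0 ≤ L / n := by positivity
  clear_value B s L
  by_cases hx : ‖x‖ < 2 * c / s
  · -- near the origin
    rw [if_pos hx]
    have hx2 : ‖x‖ < 2 * (c/s) := by rw [← mul_div_assoc]; exact hx
    have hsub : Metric.ball x (c/s) ⊆ Metric.ball (0:E2) (3*(c/s)) := by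
      intro y hy
      rw [mem_ball, dist_eq_norm] at hy
      rw [mem_ball_zero_iff]
      have h1 : ‖y‖ ≤ ‖y - x‖ + ‖x‖ := by
        calc ‖y‖ = ‖y - x + x‖ := by rw [sub_add_cancel]
        _ ≤ ‖y - x‖ + ‖x‖ := norm_add_le _ _
      linarith
    have step1 : ∫ y in Metric.ball x (c/s), |Real.log ‖y‖|
        ≤ ∫ y in Metric.ball (0:E2) (3*(c/s)), |Real.log ‖y‖| :=
      setIntegral_mono_set (integrableOn_ball_log (by positivity))
        (Filter.Eventually.of_forall fun y => abs_nonneg _)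
        (HasSubset.Subset.eventuallyLE hsub)
    have step2 := ball_bound (R := 3*(c/s)) (by positivity)
    have hlog3r : |Real.log (3*(c/s))| ≤ |Real.log (3*c)| + Real.log n / 2 := by
      have he : Real.log (3*(c/s)) = Real.log (3*c) - Real.log s := by
        rw [show 3*(c/s) = (3*c)/s by ring,
          Real.log_div (by positivity : (3*c) ≠ 0) hs0.ne']
      rw [he, hlogs]
      calc |Real.log (3*c) - Real.log n / 2| ≤ |Real.log (3*c)| + |Real.log n / 2| :=
            abs_sub _ _
        _ = |Real.log (3*c)| + Real.log n / 2 := by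
            rw [abs_of_nonneg (by linarith : (0:ℝ) ≤ Real.log n / 2)]
    have hR2 : (3*(c/s))^2 = 9*(c^2/n) := by
      rw [← hs2]; field_simp; ring
    have key1 : B * (2 * (|Real.log (3*(c/s))| * (3*(c/s))^2 + (3*(c/s))^2))
        ≤ 18*B*c^2*(|Real.log (3*c)|+1) * (1/n) + 9*B*c^2 * (Real.log n/n) := by
      rw [hR2]
      have hcn : (0:ℝ) ≤ 18 * (c^2/n) := by positivity
      have hhint := mul_le_mul_of_nonneg_left hlog3r (mul_nonneg hB0 hcn)
      calc B * (2 * (|Real.log (3*(c/s))| * (9 * (c ^ 2 / n)) + 9 * (c ^ 2 / n)))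
          = B * (18 * (c^2/n)) * |Real.log (3*(c/s))| + 18*B*c^2*(1/n) := by ring
        _ ≤ B * (18 * (c^2/n)) * (|Real.log (3*c)| + Real.log n / 2) + 18*B*c^2*(1/n) := by
            linarith
        _ = 18*B*c^2*(|Real.log (3*c)|+1) * (1/n) + 9*B*c^2 * (Real.log n/n) := by
            field_simp; ring
    have final : 18*B*c^2*(|Real.log (3*c)|+1) * (1/n) + 9*B*c^2 * (Real.log n/n)
        ≤ (B*c^2*(Real.log 2 + 1) + 18*B*c^2*(|Real.log (3*c)| + 1) + 1)
          * (1/n + L/n + Real.log n/n) := by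
      nlinarith [mul_nonneg (mul_nonneg (mul_nonneg hB0 (sq_nonneg c)) hlog2) hun.le,
        mul_nonneg (mul_nonneg hB0 (sq_nonneg c)) hun.le,
        mul_nonneg (mul_nonneg (mul_nonneg hB0 (sq_nonneg c)) ha0) hvn,
        mul_nonneg (mul_nonneg hB0 (sq_nonneg c)) hvn,
        mul_nonneg (mul_nonneg (mul_nonneg hB0 (sq_nonneg c)) hlog2) hvn,
        mul_nonneg (mul_nonneg (mul_nonneg hB0 (sq_nonneg c)) (add_nonneg hlog2 zero_le_one)) hLn,
        mul_nonneg (mul_nonneg (mul_nonneg hB0 (sq_nonneg c)) (add_nonneg ha0 zero_le_one)) hLn,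
        hLn, hun.le, hvn]
    calc ∫ y in Metric.ball x (c/s), |Real.log ‖y‖|
        ≤ ∫ y in Metric.ball (0:E2) (3*(c/s)), |Real.log ‖y‖| := step1
      _ ≤ B * (2 * (|Real.log (3*(c/s))| * (3*(c/s))^2 + (3*(c/s))^2)) := by
          rw [hBdef]; exact step2
      _ ≤ 18*B*c^2*(|Real.log (3*c)|+1) * (1/n) + 9*B*c^2 * (Real.log n/n) := key1
      _ ≤ _ := final
  · -- away from the origin
    rw [if_neg hx]
    push_neg at hx
    have hx2 : 2 * (c/s) ≤ ‖x‖ := by rw [mul_div_assoc] at hx; exact hx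
    have hx0 : 0 < ‖x‖ := lt_of_lt_of_le (by positivity) hx2
    have hpt : ∀ y ∈ Metric.ball x (c/s), ‖|Real.log ‖y‖|‖ ≤ L + Real.log 2 := by
      intro y hy
      rw [mem_ball, dist_eq_norm] at hy
      have hyl : ‖x‖/2 ≤ ‖y‖ := by
        have h1 : ‖x‖ - ‖y‖ ≤ ‖x - y‖ := norm_sub_norm_le x y
        rw [norm_sub_rev] at h1
        linarith
      have hyu : ‖y‖ ≤ 2*‖x‖ := by
        have h1 : ‖y‖ ≤ ‖y - x‖ + ‖x‖ := by
          calc ‖y‖ = ‖y - x + x‖ := by rw [sub_add_cancel]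
          _ ≤ ‖y - x‖ + ‖x‖ := norm_add_le _ _
        linarith
      have hy0 : 0 < ‖y‖ := lt_of_lt_of_le (by positivity) hyl
      have hup : Real.log ‖y‖ ≤ Real.log 2 + Real.log ‖x‖ := by
        have := Real.log_le_log hy0 hyu
        rwa [Real.log_mul two_ne_zero hx0.ne'] at this
      have hlo : Real.log ‖x‖ - Real.log 2 ≤ Real.log ‖y‖ := by
        have := Real.log_le_log (by positivity) hyl
        rwa [Real.log_div hx0.ne' two_ne_zero] at this
      rw [Real.norm_eq_abs, abs_abs, abs_le]
      constructor
      · have h2 : -L ≤ Real.log ‖x‖ := by rw [hLdef]; exact neg_abs_le _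
        linarith
      · have h2 : Real.log ‖x‖ ≤ L := by rw [hLdef]; exact le_abs_self _
        linarith
    have hvol : volume (Metric.ball x (c/s)) < ⊤ := measure_ball_lt_top
    have hmeas : AEStronglyMeasurable (fun y : E2 => |Real.log ‖y‖|)
        (volume.restrict (Metric.ball x (c/s))) :=
      ((Real.measurable_log.comp measurable_norm).abs).aestronglyMeasurable
    have hb := norm_setIntegral_le_of_norm_le_const hvol hpt
    rw [Real.norm_eq_abs] at hb
    have hInt : ∫ y in Metric.ball x (c/s), |Real.log ‖y‖|
        ≤ (L + Real.log 2) * (volume (Metric.ball x (c/s))).toReal :=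
      (le_abs_self _).trans hb
    have hvol2 : (volume (Metric.ball x (c/s))).toReal = (c^2/n) * B := by
      rw [hBdef, EuclideanSpace.volume_ball (Fin 2) x (c/s),
        EuclideanSpace.volume_ball (Fin 2) (0:E2) 1]
      have hg : 0 ≤ Real.sqrt π ^ Fintype.card (Fin 2) /
          Real.Gamma (Fintype.card (Fin 2) / 2 + 1) :=
        div_nonneg (pow_nonneg (Real.sqrt_nonneg _) _)
          (Real.Gamma_nonneg_of_nonneg (by norm_num))
      rw [ENNReal.toReal_mul, ENNReal.toReal_mul, ENNReal.toReal_pow, ENNReal.toReal_pow,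
        ENNReal.toReal_ofReal hr0.le, ENNReal.toReal_ofReal hg, ENNReal.toReal_ofReal one_pos.le]
      simp only [Fintype.card_fin, one_pow, one_mul]
      rw [show (c/s)^2 = c^2/n by rw [div_pow, hs2]]
    rw [hvol2] at hInt
    refine hInt.trans ?_
    rw [add_zero]
    exact far_final B c n L (Real.log 2) (|Real.log (3*c)|) hB0 hc hn hL0 hlog2 ha0
end

section
/- Let R: ℝ² → ℝ be continuous and compactly supported, B a standard 2-dimensional Brownian motion, and t > 0. Then (n log n)^{−1} ∫₀^{nt}∫₀^{nt} E[R(B_s − B_u)] ds du → (t/π) ∫_{ℝ²} R(x) dx as n → ∞. -/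
open MeasureTheory ProbabilityTheory Filter

/-- The `d`-dimensional heat kernel at time `u`. -/
noncomputable def heatKernel (d : ℕ) (u : ℝ) (x : EuclideanSpace ℝ (Fin d)) : ℝ :=
  (2 * Real.pi * u) ^ (-(d : ℝ) / 2) * Real.exp (-‖x‖ ^ 2 / (2 * u))

/-- `B` is a standard `d`-dimensional Brownian motion under `P`. -/
def IsStdBM {Ω : Type*} [MeasurableSpace Ω] (d : ℕ) (P : Measure Ω)
    (B : ℝ → Ω → EuclideanSpace ℝ (Fin d)) : Prop :=
  (∀ t, Measurable (B t)) ∧ (∀ ω, B 0 ω = 0) ∧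
  (∀ s t : ℝ, 0 ≤ s → s < t →
    Measure.map (fun ω => B t ω - B s ω) P =
      volume.withDensity (fun x => ENNReal.ofReal (heatKernel d (t - s) x))) ∧
  (∀ (m : ℕ) (τ : Fin (m + 1) → ℝ), Monotone τ → (∀ i, 0 ≤ τ i) →
    iIndepFun
      (fun i : Fin m => fun ω => B (τ i.succ) ω - B (τ i.castSucc) ω) P)

local notation "E2" => EuclideanSpace ℝ (Fin 2)


lemma hK_eq {r : ℝ} (hr : 0 < r) (x : E2) :
    heatKernel 2 r x = (2 * Real.pi * r)⁻¹ * Real.exp (-‖x‖ ^ 2 / (2 * r)) := by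
  have h : (-((2:ℕ) : ℝ) / 2) = ((-1 : ℤ) : ℝ) := by norm_num
  rw [heatKernel, h, Real.rpow_intCast, zpow_neg_one]

lemma hK_cont (r : ℝ) : Continuous (heatKernel 2 r) := by
  unfold heatKernel
  exact continuous_const.mul (Real.continuous_exp.comp ((continuous_norm.pow 2).neg.div_const _))

lemma hK_nonneg {r : ℝ} (hr : 0 < r) (x : E2) : 0 ≤ heatKernel 2 r x := by
  rw [hK_eq hr]
  positivity

lemma integral_withDensity_hK (R' : E2 → ℝ) {r : ℝ} (hr : 0 < r) :
    ∫ x, R' x ∂(volume.withDensity fun x => ENNReal.ofReal (heatKernel 2 r x))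
      = ∫ x, R' x * heatKernel 2 r x := by
  have hmeas : Measurable fun x : E2 => (heatKernel 2 r x).toNNReal :=
    (continuous_real_toNNReal.comp (hK_cont r)).measurable
  rw [show (fun x : E2 => ENNReal.ofReal (heatKernel 2 r x))
      = fun x => ((heatKernel 2 r x).toNNReal : ENNReal) from rfl,
    integral_withDensity_eq_integral_smul hmeas]
  congr 1; ext x
  rw [NNReal.smul_def, Real.coe_toNNReal _ (hK_nonneg hr x), smul_eq_mul, mul_comm]

lemma integral_neg_hK (R' : E2 → ℝ) (r : ℝ) :
    ∫ x, R' (-x) * heatKernel 2 r x = ∫ x, R' x * heatKernel 2 r x := by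
  conv_rhs => rw [← MeasureTheory.integral_neg_eq_self (fun x => R' x * heatKernel 2 r x) volume]
  unfold heatKernel
  simp [norm_neg]




lemma cesaro_aux {f ψ : ℝ → ℝ} {L a : ℝ}
    (hfψ : ∀ b, a ≤ b → IntervalIntegrable (fun x => f x * ψ x) volume a b)
    (hψi : ∀ b, a ≤ b → IntervalIntegrable ψ volume a b)
    (hψ0 : ∀ x, a ≤ x → 0 ≤ ψ x)
    (hf : Tendsto f atTop (nhds L))
    (hdiv : Tendsto (fun T => ∫ x in a..T, ψ x) atTop atTop) :
    Tendsto (fun T => (∫ x in a..T, f x * ψ x) / (∫ x in a..T, ψ x)) atTop (nhds L) := by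
  rw [Metric.tendsto_atTop]
  intro ε hε
  have hε2 : 0 < ε / 2 := by positivity
  obtain ⟨M0, hM0⟩ := Metric.tendsto_atTop.mp hf (ε / 2) hε2
  set M := max M0 a with hMdef
  have haM : a ≤ M := le_max_right _ _
  set C := |∫ x in a..M, (f x - L) * ψ x| with hCdef
  have hC0 : 0 ≤ C := abs_nonneg _
  have hsub : ∀ b, a ≤ b → IntervalIntegrable (fun x => (f x - L) * ψ x) volume a b := by
    intro b hb
    have h : (fun x => (f x - L) * ψ x) = fun x => f x * ψ x - L * ψ x := by
      ext x; ring
    rw [h]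
    exact (hfψ b hb).sub ((hψi b hb).const_mul L)
  have key : ∀ T, M ≤ T →
      |(∫ x in a..T, f x * ψ x) - L * ∫ x in a..T, ψ x| ≤ C + ε / 2 * ∫ x in a..T, ψ x := by
    intro T hT
    have haT : a ≤ T := haM.trans hT
    have iMT : IntervalIntegrable (fun x => (f x - L) * ψ x) volume M T :=
      (hsub M haM).symm.trans (hsub T haT)
    have iMTψ : IntervalIntegrable ψ volume M T :=
      (hψi M haM).symm.trans (hψi T haT)
    have e1 : (∫ x in a..T, f x * ψ x) - L * ∫ x in a..T, ψ x
        = ∫ x in a..T, (f x - L) * ψ x := by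
      rw [← intervalIntegral.integral_const_mul,
        ← intervalIntegral.integral_sub (hfψ T haT) ((hψi T haT).const_mul L)]
      congr 1; ext x; ring
    rw [e1, ← intervalIntegral.integral_add_adjacent_intervals (hsub M haM) iMT]
    have h2 : |∫ x in M..T, (f x - L) * ψ x| ≤ ∫ x in M..T, ε / 2 * ψ x := by
      refine (intervalIntegral.abs_integral_le_integral_abs hT).trans ?_
      refine intervalIntegral.integral_mono_on hT iMT.abs ((iMTψ).const_mul (ε / 2)) ?_
      intro x hx
      have hax : a ≤ x := haM.trans hx.1
      rw [abs_mul, abs_of_nonneg (hψ0 x hax)]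
      refine mul_le_mul_of_nonneg_right ?_ (hψ0 x hax)
      have := hM0 x ((le_max_left _ _).trans hx.1)
      rw [Real.dist_eq] at this
      exact this.le
    have h3 : ∫ x in M..T, ε / 2 * ψ x
        = ε / 2 * ((∫ x in a..T, ψ x) - ∫ x in a..M, ψ x) := by
      rw [intervalIntegral.integral_const_mul]
      congr 1
      rw [← intervalIntegral.integral_add_adjacent_intervals (hψi M haM) iMTψ]
      ring
    have h4 : 0 ≤ ∫ x in a..M, ψ x :=
      intervalIntegral.integral_nonneg haM fun x hx => hψ0 x hx.1
    calc |(∫ x in a..M, (f x - L) * ψ x) + ∫ x in M..T, (f x - L) * ψ x|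
        ≤ C + |∫ x in M..T, (f x - L) * ψ x| := by
          rw [hCdef]; exact abs_add_le _ _
      _ ≤ C + ε / 2 * ((∫ x in a..T, ψ x) - ∫ x in a..M, ψ x) := by
          rw [← h3]; exact add_le_add le_rfl h2
      _ ≤ C + ε / 2 * ∫ x in a..T, ψ x := by nlinarith
  have hev1 := hdiv.eventually_gt_atTop (2 * C / ε)
  have hev2 := hdiv.eventually_gt_atTop 0
  rw [eventually_atTop] at hev1 hev2
  obtain ⟨N1, hN1⟩ := hev1
  obtain ⟨N2, hN2⟩ := hev2
  refine ⟨max M (max N1 N2), fun T hT => ?_⟩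
  have hTM : M ≤ T := (le_max_left _ _).trans hT
  have hB1 : 2 * C / ε < ∫ x in a..T, ψ x :=
    hN1 T (((le_max_left _ _).trans (le_max_right _ _)).trans hT)
  have hB2 : (0:ℝ) < ∫ x in a..T, ψ x :=
    hN2 T (((le_max_right _ _).trans (le_max_right _ _)).trans hT)
  set A := ∫ x in a..T, f x * ψ x
  set Bv := ∫ x in a..T, ψ x
  rw [Real.dist_eq]
  have hBne : Bv ≠ 0 := ne_of_gt hB2
  have e : A / Bv - L = (A - L * Bv) / Bv := by field_simp
  rw [e, abs_div, abs_of_pos hB2]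
  have hk := key T hTM
  have hCB : C / Bv < ε / 2 := by
    rw [div_lt_iff₀ hB2]
    nlinarith [(div_lt_iff₀ hε).mp hB1]
  calc |A - L * Bv| / Bv ≤ (C + ε / 2 * Bv) / Bv := by
        gcongr
    _ = C / Bv + ε / 2 := by rw [add_div, mul_div_assoc, div_self hBne, mul_one]
    _ < ε / 2 + ε / 2 := by linarith
    _ = ε := add_halves ε

noncomputable def Gf (R : E2 → ℝ) (r : ℝ) : ℝ := ∫ x, R x * Real.exp (-‖x‖ ^ 2 / (2 * r))

noncomputable def Ff (R : E2 → ℝ) (r : ℝ) : ℝ := (2 * Real.pi * r)⁻¹ * Gf R r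

noncomputable def Hf (R : E2 → ℝ) (s : ℝ) : ℝ := ∫ r in (0:ℝ)..s, Ff R r

variable {R : E2 → ℝ} (hRc : Continuous R) (hRs : HasCompactSupport R)

lemma exp_term_le_one {r : ℝ} (hr : 0 < r) (x : E2) :
    Real.exp (-‖x‖ ^ 2 / (2 * r)) ≤ 1 := by
  rw [Real.exp_le_one_iff]
  apply div_nonpos_of_nonpos_of_nonneg
  · exact neg_nonpos.mpr (by positivity)
  · positivity

lemma norm_term_le (hr : 0 < r) (x : E2) : ‖R x * Real.exp (-‖x‖ ^ 2 / (2 * r))‖ ≤ |R x| := by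
  rw [norm_mul, Real.norm_eq_abs, Real.norm_eq_abs, Real.abs_exp]
  calc |R x| * Real.exp (-‖x‖ ^ 2 / (2 * r)) ≤ |R x| * 1 :=
        mul_le_mul_of_nonneg_left (exp_term_le_one hr x) (abs_nonneg _)
    _ = |R x| := mul_one _

include hRc hRs in
lemma G_tendsto : Tendsto (Gf R) atTop (nhds (∫ x, R x)) := by
  apply tendsto_integral_filter_of_dominated_convergence (fun x => |R x|)
  · filter_upwards with r
    exact (hRc.mul (Real.continuous_exp.comp
      ((continuous_norm.pow 2).neg.div_const _))).aestronglyMeasurable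
  · filter_upwards [eventually_gt_atTop (0:ℝ)] with r hr
    filter_upwards with x
    exact norm_term_le hr x
  · exact (hRc.integrable_of_hasCompactSupport hRs).abs
  · filter_upwards with x
    have h0 : Tendsto (fun r : ℝ => -‖x‖ ^ 2 / (2 * r)) atTop (nhds 0) := by
      have h1 : Tendsto (fun r : ℝ => -‖x‖ ^ 2 / 2 * r⁻¹) atTop (nhds 0) := by
        have := tendsto_inv_atTop_zero.const_mul (-‖x‖ ^ 2 / 2)
        rwa [mul_zero] at this
      apply h1.congr'
      filter_upwards [eventually_gt_atTop (0:ℝ)] with r hr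
      field_simp
    have h2 : Tendsto (fun r : ℝ => Real.exp (-‖x‖ ^ 2 / (2 * r))) atTop (nhds 1) := by
      simpa [Function.comp_def] using (Real.continuous_exp.tendsto 0).comp h0
    simpa using h2.const_mul (R x)

include hRc hRs in
lemma G_continuousAt {r : ℝ} (hr : 0 < r) : ContinuousAt (Gf R) r := by
  apply continuousAt_of_dominated (bound := fun x => |R x|)
  · filter_upwards with r'
    exact (hRc.mul (Real.continuous_exp.comp
      ((continuous_norm.pow 2).neg.div_const _))).aestronglyMeasurable
  · filter_upwards [eventually_gt_nhds hr] with r' hr'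
    filter_upwards with x
    exact norm_term_le hr' x
  · exact (hRc.integrable_of_hasCompactSupport hRs).abs
  · filter_upwards with x
    have hden : ContinuousAt (fun r' : ℝ => -‖x‖ ^ 2 / (2 * r')) r := by
      apply ContinuousAt.div continuousAt_const (by fun_prop)
      positivity
    exact continuousAt_const.mul (Real.continuous_exp.continuousAt.comp hden)

include hRc hRs in
lemma F_contOn : ContinuousOn (Ff R) (Set.Ioi 0) := by
  intro r hr
  have hr' : (0:ℝ) < r := hr
  apply ContinuousAt.continuousWithinAt
  apply ContinuousAt.mul ?_ (G_continuousAt hRc hRs hr')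
  apply ContinuousAt.inv₀ (by fun_prop)
  positivity

include hRc hRs in
lemma F_intInt {C : ℝ} (hbound : ∀ r : ℝ, 0 < r → |Ff R r| ≤ C) {b : ℝ} (hb : 0 ≤ b) :
    IntervalIntegrable (Ff R) volume 0 b := by
  rw [intervalIntegrable_iff_integrableOn_Ioc_of_le hb]
  refine ⟨((F_contOn hRc hRs).mono Set.Ioc_subset_Ioi_self).aestronglyMeasurable
      measurableSet_Ioc, ?_⟩
  apply HasFiniteIntegral.restrict_of_bounded (C := C) measure_Ioc_lt_top
  rw [ae_restrict_iff' measurableSet_Ioc]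
  filter_upwards with r hrmem
  exact hbound r hrmem.1

include hRc hRs in
lemma H_contOn {C : ℝ} (hbound : ∀ r : ℝ, 0 < r → |Ff R r| ≤ C) {b : ℝ} (hb : 0 ≤ b) :
    ContinuousOn (Hf R) (Set.Icc 0 b) := by
  have h := intervalIntegral.continuousOn_primitive_interval
    (f := Ff R) (μ := volume) (a := 0) (b := b) ?_
  · rwa [Set.uIcc_of_le hb] at h
  · rw [Set.uIcc_of_le hb, integrableOn_Icc_iff_integrableOn_Ioc]
    exact (intervalIntegrable_iff_integrableOn_Ioc_of_le hb).mp
      (F_intInt hRc hRs hbound hb)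

include hRc hRs in
lemma rF_tendsto : Tendsto (fun r => r * Ff R r) atTop (nhds ((∫ x, R x) / (2 * Real.pi))) := by
  have h1 : Tendsto (fun r => (2 * Real.pi)⁻¹ * Gf R r) atTop
      (nhds ((2 * Real.pi)⁻¹ * ∫ x, R x)) := (G_tendsto hRc hRs).const_mul _
  have h2 : (2 * Real.pi)⁻¹ * ∫ x, R x = (∫ x, R x) / (2 * Real.pi) := by
    rw [inv_mul_eq_div]
  rw [← h2]
  apply h1.congr'
  filter_upwards [eventually_gt_atTop (0:ℝ)] with r hr
  have hπ : (0:ℝ) < Real.pi := Real.pi_pos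
  rw [Ff]
  field_simp

include hRc hRs in
lemma H_asymp {C : ℝ} (hbound : ∀ r : ℝ, 0 < r → |Ff R r| ≤ C) :
    Tendsto (fun s => Hf R s / Real.log s) atTop (nhds ((∫ x, R x) / (2 * Real.pi))) := by
  have hces : Tendsto (fun T => (∫ x in (1:ℝ)..T, (x * Ff R x) * x⁻¹) /
      (∫ x in (1:ℝ)..T, x⁻¹)) atTop (nhds ((∫ x, R x) / (2 * Real.pi))) := by
    apply cesaro_aux
    · intro b hb
      have base : IntervalIntegrable (Ff R) volume 1 b :=
        (F_intInt hRc hRs hbound zero_le_one).symm.trans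
          (F_intInt hRc hRs hbound (zero_le_one.trans hb))
      rw [intervalIntegrable_iff_integrableOn_Ioc_of_le hb] at base ⊢
      refine base.congr_fun (fun x hx => ?_) measurableSet_Ioc
      have hx0 : x ≠ 0 := by have := hx.1; positivity
      rw [mul_comm x, mul_assoc, mul_inv_cancel₀ hx0, mul_one]
    · intro b hb
      apply ContinuousOn.intervalIntegrable
      apply continuousOn_id.inv₀
      intro x hx
      rw [Set.uIcc_of_le hb] at hx
      have : (1:ℝ) ≤ x := hx.1
      positivity
    · intro x hx
      have : (0:ℝ) < x := lt_of_lt_of_le one_pos hx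
      positivity
    · exact rF_tendsto hRc hRs
    · apply Real.tendsto_log_atTop.congr'
      filter_upwards [eventually_ge_atTop (1:ℝ)] with T hT
      rw [integral_inv (by rw [Set.uIcc_of_le hT]; intro h; exact absurd h.1 (by norm_num)),
        div_one]
  have hces2 : Tendsto (fun s => (∫ x in (1:ℝ)..s, Ff R x) / Real.log s) atTop
      (nhds ((∫ x, R x) / (2 * Real.pi))) := by
    apply hces.congr'
    filter_upwards [eventually_ge_atTop (1:ℝ)] with s hs
    rw [integral_inv (by rw [Set.uIcc_of_le hs]; intro h; exact absurd h.1 (by norm_num)),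
      div_one]
    congr 1
    apply intervalIntegral.integral_congr
    intro x hx
    rw [Set.uIcc_of_le hs] at hx
    have hx0 : x ≠ 0 := by have := hx.1; positivity
    simp only []
    rw [mul_comm x, mul_assoc, mul_inv_cancel₀ hx0, mul_one]
  have hzero : Tendsto (fun s : ℝ => Hf R 1 / Real.log s) atTop (nhds 0) := by
    simpa [div_eq_mul_inv] using
      (Real.tendsto_log_atTop.inv_tendsto_atTop).const_mul (Hf R 1)
  have := hzero.add hces2
  rw [zero_add] at this
  apply this.congr'
  filter_upwards [eventually_ge_atTop (1:ℝ)] with s hs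
  rw [← add_div]
  congr 1
  rw [Hf, Hf, ← intervalIntegral.integral_add_adjacent_intervals
    (F_intInt hRc hRs hbound zero_le_one)
    ((F_intInt hRc hRs hbound zero_le_one).symm.trans
      (F_intInt hRc hRs hbound (zero_le_one.trans hs)))]

include hRc hRs in
lemma intH_asymp {C : ℝ} (hbound : ∀ r : ℝ, 0 < r → |Ff R r| ≤ C) :
    Tendsto (fun T => (∫ s in (0:ℝ)..T, Hf R s) / (T * Real.log T)) atTop
      (nhds ((∫ x, R x) / (2 * Real.pi))) := by
  have hHint : ∀ a b : ℝ, 0 ≤ a → a ≤ b → IntervalIntegrable (Hf R) volume a b := by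
    intro a b ha hb
    apply ContinuousOn.intervalIntegrable
    apply (H_contOn hRc hRs hbound (ha.trans hb)).mono
    rw [Set.uIcc_of_le hb]
    exact Set.Icc_subset_Icc ha le_rfl
  have hlogform : ∀ T : ℝ, 2 ≤ T →
      (∫ x in (2:ℝ)..T, Real.log x) = T * Real.log T - 2 * Real.log 2 - T + 2 := by
    intro T hT
    rw [integral_log]
  have hTlogT : Tendsto (fun T : ℝ => T * Real.log T) atTop atTop :=
    tendsto_id.atTop_mul_atTop₀ Real.tendsto_log_atTop
  have hdivB : Tendsto (fun T => ∫ x in (2:ℝ)..T, Real.log x) atTop atTop := by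
    have base : Tendsto (fun T : ℝ => T * (Real.log T + (-1)) + (2 - 2 * Real.log 2))
        atTop atTop :=
      tendsto_atTop_add_const_right _ _
        (tendsto_id.atTop_mul_atTop₀ (tendsto_atTop_add_const_right _ _ Real.tendsto_log_atTop))
    apply base.congr'
    filter_upwards [eventually_ge_atTop (2:ℝ)] with T hT
    rw [hlogform T hT]
    ring
  have hratio : Tendsto (fun T => (∫ x in (2:ℝ)..T, Real.log x) / (T * Real.log T))
      atTop (nhds 1) := by
    have invlog : Tendsto (fun T : ℝ => (Real.log T)⁻¹) atTop (nhds 0) :=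
      Real.tendsto_log_atTop.inv_tendsto_atTop
    have invTlog : Tendsto (fun T : ℝ => (T * Real.log T)⁻¹) atTop (nhds 0) :=
      hTlogT.inv_tendsto_atTop
    have h1 : Tendsto (fun T : ℝ =>
        1 - (Real.log T)⁻¹ + (2 - 2 * Real.log 2) * (T * Real.log T)⁻¹) atTop (nhds 1) := by
      have ha : Tendsto (fun T : ℝ => 1 - (Real.log T)⁻¹) atTop (nhds (1 - 0)) :=
        tendsto_const_nhds.sub invlog
      have hb := invTlog.const_mul (2 - 2 * Real.log 2)
      simpa using ha.add hb
    apply h1.congr'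
    filter_upwards [eventually_ge_atTop (2:ℝ)] with T hT
    have hT0 : (0:ℝ) < T := lt_of_lt_of_le two_pos hT
    have hlog0 : (0:ℝ) < Real.log T := Real.log_pos (lt_of_lt_of_le one_lt_two hT)
    rw [hlogform T hT]
    field_simp
    ring
  have hcesB : Tendsto (fun T => (∫ s in (2:ℝ)..T, (Hf R s / Real.log s) * Real.log s) /
      (∫ s in (2:ℝ)..T, Real.log s)) atTop (nhds ((∫ x, R x) / (2 * Real.pi))) := by
    apply cesaro_aux
    · intro b hb
      have base : IntervalIntegrable (Hf R) volume 2 b := hHint 2 b two_pos.le hb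
      rw [intervalIntegrable_iff_integrableOn_Ioc_of_le hb] at base ⊢
      refine base.congr_fun (fun s hs => ?_) measurableSet_Ioc
      have h1 : (1:ℝ) < s := lt_trans one_lt_two hs.1
      rw [div_mul_cancel₀ _ (ne_of_gt (Real.log_pos h1))]
    · intro b hb
      apply ContinuousOn.intervalIntegrable
      apply Real.continuousOn_log.mono
      intro x hx
      rw [Set.uIcc_of_le hb] at hx
      have : (2:ℝ) ≤ x := hx.1
      simp only [Set.mem_compl_iff, Set.mem_singleton_iff]
      intro h
      rw [h] at this
      norm_num at this
    · intro x hx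
      exact Real.log_nonneg (le_trans one_le_two hx)
    · exact H_asymp hRc hRs hbound
    · exact hdivB
  have hcesB2 : Tendsto (fun T => (∫ s in (2:ℝ)..T, Hf R s) /
      (∫ s in (2:ℝ)..T, Real.log s)) atTop (nhds ((∫ x, R x) / (2 * Real.pi))) := by
    apply hcesB.congr'
    filter_upwards [eventually_ge_atTop (2:ℝ)] with T hT
    congr 1
    apply intervalIntegral.integral_congr
    intro s hs
    rw [Set.uIcc_of_le hT] at hs
    have h1 : (1:ℝ) < s := lt_of_lt_of_le one_lt_two hs.1
    simp only []
    rw [div_mul_cancel₀ _ (ne_of_gt (Real.log_pos h1))]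
  have hzero : Tendsto (fun T : ℝ => (∫ s in (0:ℝ)..2, Hf R s) * (T * Real.log T)⁻¹)
      atTop (nhds 0) := by
    have := hTlogT.inv_tendsto_atTop.const_mul (∫ s in (0:ℝ)..2, Hf R s)
    simpa using this
  have hcomb := hzero.add (hcesB2.mul hratio)
  rw [zero_add, mul_one] at hcomb
  apply hcomb.congr'
  filter_upwards [eventually_ge_atTop (2:ℝ), hdivB.eventually_gt_atTop 0] with T hT hbpos
  have hT0 : (0:ℝ) < T := lt_of_lt_of_le two_pos hT
  have hlog0 : (0:ℝ) < Real.log T := Real.log_pos (lt_of_lt_of_le one_lt_two hT)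
  have hsplit : (∫ s in (0:ℝ)..T, Hf R s)
      = (∫ s in (0:ℝ)..2, Hf R s) + ∫ s in (2:ℝ)..T, Hf R s :=
    (intervalIntegral.integral_add_adjacent_intervals
      (hHint 0 2 le_rfl two_pos.le) (hHint 2 T two_pos.le hT)).symm
  rw [hsplit, add_div, ← div_eq_mul_inv]
  congr 1
  rw [div_mul_div_comm, mul_comm (∫ s in (2:ℝ)..T, Hf R s) (∫ s in (2:ℝ)..T, Real.log s),
    mul_div_mul_left _ _ (ne_of_gt hbpos)]

/-- For `d = 2` and continuous compactly supported `R`,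
`(n log n)⁻¹ ∫₀^{nt}∫₀^{nt} E[R(B_s - B_u)] ds du → (t/π) ∫_{ℝ²} R(x) dx`. -/
theorem stmt7 {Ω : Type*} [MeasurableSpace Ω] (P : Measure Ω) [IsProbabilityMeasure P]
    (B : ℝ → Ω → EuclideanSpace ℝ (Fin 2)) (hB : IsStdBM 2 P B)
    (R : EuclideanSpace ℝ (Fin 2) → ℝ) (hRc : Continuous R) (hRs : HasCompactSupport R)
    (t : ℝ) (ht : 0 < t) :
    Tendsto (fun n : ℕ =>
        ((n : ℝ) * Real.log n)⁻¹ *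
          ∫ s in (0:ℝ)..((n : ℝ) * t), ∫ u in (0:ℝ)..((n : ℝ) * t),
            ∫ ω, R (B s ω - B u ω) ∂P)
      atTop (nhds (t / Real.pi * ∫ x, R x)) := by
  obtain ⟨hBmeas, hB0, hBlaw, hBind⟩ := hB
  obtain ⟨C, hC⟩ := hRs.exists_bound_of_continuous hRc
  have hF_eq_heat : ∀ r : ℝ, 0 < r → Ff R r = ∫ x, R x * heatKernel 2 r x := by
    intro r hr
    rw [Ff, Gf, ← integral_const_mul]
    simp_rw [hK_eq hr]
    exact congrArg (integral volume) (funext fun x => by ring)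
  have hFbound : ∀ r : ℝ, 0 < r → |Ff R r| ≤ C := by
    intro r hr
    have hmap : Measure.map (fun ω => B r ω - B 0 ω) P
        = volume.withDensity (fun x => ENNReal.ofReal (heatKernel 2 r x)) := by
      have := hBlaw 0 r le_rfl hr
      rwa [sub_zero] at this
    have hFexp : Ff R r = ∫ ω, R (B r ω - B 0 ω) ∂P := by
      rw [hF_eq_heat r hr, ← integral_withDensity_hK R hr, ← hmap,
        integral_map (φ := fun ω => B r ω - B 0 ω) ((hBmeas r).sub (hBmeas 0)).aemeasurable hRc.aestronglyMeasurable]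
    rw [hFexp]
    calc |∫ ω, R (B r ω - B 0 ω) ∂P| ≤ C * (P Set.univ).toReal :=
          norm_integral_le_of_norm_le_const (Filter.Eventually.of_forall fun ω => hC _)
      _ = C := by simp
  have phi_eq : ∀ s u : ℝ, 0 ≤ s → 0 ≤ u → s ≠ u →
      (∫ ω, R (B s ω - B u ω) ∂P) = Ff R |s - u| := by
    intro s u hs hu hne
    rcases lt_or_gt_of_ne hne with h | h
    · have hr : 0 < u - s := by linarith
      have e1 : (∫ ω, R (B s ω - B u ω) ∂P)
          = ∫ ω, (fun x => R (-x)) (B u ω - B s ω) ∂P := by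
        congr 1
        funext ω
        simp only [neg_sub]
      have habs : |s - u| = u - s := by
        rw [abs_sub_comm, abs_of_pos hr]
      rw [e1, ← integral_map (φ := fun ω => B u ω - B s ω) (f := fun x => R (-x)) ((hBmeas u).sub (hBmeas s)).aemeasurable
          (Continuous.aestronglyMeasurable (by fun_prop : Continuous fun x : E2 => R (-x))),
        hBlaw s u hs h, integral_withDensity_hK (fun x => R (-x)) hr,
        integral_neg_hK R (u - s), ← hF_eq_heat _ hr, habs]
    · have hr : 0 < s - u := by linarith
      rw [← integral_map (φ := fun ω => B s ω - B u ω) ((hBmeas s).sub (hBmeas u)).aemeasurable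
          hRc.aestronglyMeasurable,
        hBlaw u s hu h, integral_withDensity_hK R hr, ← hF_eq_heat _ hr,
        abs_of_pos hr]
  have F_int0 : ∀ b : ℝ, 0 ≤ b → IntervalIntegrable (Ff R) volume 0 b :=
    fun b hb => F_intInt hRc hRs hFbound hb
  have inner_eq : ∀ T : ℝ, 0 < T → ∀ s ∈ Set.uIcc (0:ℝ) T,
      (∫ u in (0:ℝ)..T, ∫ ω, R (B s ω - B u ω) ∂P) = Hf R s + Hf R (T - s) := by
    intro T hT s hs
    rw [Set.uIcc_of_le hT.le] at hs
    obtain ⟨hs0, hsT⟩ := hs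
    have step1 : (∫ u in (0:ℝ)..T, ∫ ω, R (B s ω - B u ω) ∂P)
        = ∫ u in (0:ℝ)..T, Ff R |s - u| := by
      apply intervalIntegral.integral_congr_ae
      have hae : ∀ᵐ u : ℝ, u ≠ s := by
        rw [ae_iff]
        have he : {u : ℝ | ¬ u ≠ s} = {s} := by ext u; simp
        rw [he]
        exact measure_singleton s
      filter_upwards [hae] with u hu hmem
      rw [Set.uIoc_of_le hT.le] at hmem
      exact phi_eq s u hs0 hmem.1.le (fun hh => hu hh.symm)
    rw [step1]
    have i1 : IntervalIntegrable (fun u => Ff R |s - u|) volume 0 s := by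
      have base := (F_int0 s hs0).comp_sub_left s
      rw [sub_zero, sub_self] at base
      have base' := base.symm
      rw [intervalIntegrable_iff_integrableOn_Ioc_of_le hs0] at base' ⊢
      refine base'.congr_fun (fun u hu => ?_) measurableSet_Ioc
      show Ff R (s - u) = Ff R |s - u|
      rw [abs_of_nonneg (by linarith [hu.2] : (0:ℝ) ≤ s - u)]
    have i2 : IntervalIntegrable (fun u => Ff R |s - u|) volume s T := by
      have base := (F_int0 (T - s) (by linarith)).comp_sub_right s
      rw [zero_add, sub_add_cancel] at base
      rw [intervalIntegrable_iff_integrableOn_Ioc_of_le hsT] at base ⊢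
      refine base.congr_fun (fun u hu => ?_) measurableSet_Ioc
      show Ff R (u - s) = Ff R |s - u|
      rw [abs_sub_comm, abs_of_nonneg (by linarith [hu.1] : (0:ℝ) ≤ u - s)]
    rw [← intervalIntegral.integral_add_adjacent_intervals i1 i2]
    congr 1
    · rw [intervalIntegral.integral_congr (g := fun u => Ff R (s - u)) ?_]
      · rw [intervalIntegral.integral_comp_sub_left (Ff R) s, sub_self, sub_zero, Hf]
      · intro u hu
        rw [Set.uIcc_of_le hs0] at hu
        show Ff R |s - u| = Ff R (s - u)
        rw [abs_of_nonneg (by linarith [hu.2] : (0:ℝ) ≤ s - u)]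
    · rw [intervalIntegral.integral_congr (g := fun u => Ff R (u - s)) ?_]
      · rw [intervalIntegral.integral_comp_sub_right (Ff R) s, sub_self, Hf]
      · intro u hu
        rw [Set.uIcc_of_le hsT] at hu
        show Ff R |s - u| = Ff R (u - s)
        rw [abs_sub_comm, abs_of_nonneg (by linarith [hu.1] : (0:ℝ) ≤ u - s)]
  have I_eq : ∀ T : ℝ, 0 < T →
      (∫ s in (0:ℝ)..T, ∫ u in (0:ℝ)..T, ∫ ω, R (B s ω - B u ω) ∂P)
        = 2 * ∫ s in (0:ℝ)..T, Hf R s := by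
    intro T hT
    rw [intervalIntegral.integral_congr (fun s hs => inner_eq T hT s hs)]
    have hH1 : IntervalIntegrable (Hf R) volume 0 T := by
      apply ContinuousOn.intervalIntegrable
      rw [Set.uIcc_of_le hT.le]
      exact H_contOn hRc hRs hFbound hT.le
    have hH2 : IntervalIntegrable (fun s => Hf R (T - s)) volume 0 T := by
      have h := hH1.comp_sub_left T
      rw [sub_zero, sub_self] at h
      exact h.symm
    rw [intervalIntegral.integral_add hH1 hH2,
      intervalIntegral.integral_comp_sub_left (Hf R) T, sub_self, sub_zero]
    ring
  have main : Tendsto (fun T : ℝ =>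
      (∫ s in (0:ℝ)..T, ∫ u in (0:ℝ)..T, ∫ ω, R (B s ω - B u ω) ∂P)
        / (T * Real.log T)) atTop (nhds ((∫ x, R x) / Real.pi)) := by
    have h2 := (intH_asymp hRc hRs hFbound).const_mul 2
    have e : (2:ℝ) * ((∫ x, R x) / (2 * Real.pi)) = (∫ x, R x) / Real.pi := by
      have hπ : Real.pi ≠ 0 := Real.pi_ne_zero
      field_simp
    rw [e] at h2
    apply h2.congr'
    filter_upwards [eventually_gt_atTop (0:ℝ)] with T hT
    rw [I_eq T hT, mul_div_assoc]
  have hseq : Tendsto (fun n : ℕ => (n : ℝ) * t) atTop atTop :=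
    tendsto_natCast_atTop_atTop.atTop_mul_const ht
  have comp1 := main.comp hseq
  have invlogn : Tendsto (fun n : ℕ => (Real.log n)⁻¹) atTop (nhds 0) :=
    (Real.tendsto_log_atTop.comp tendsto_natCast_atTop_atTop).inv_tendsto_atTop
  have factor2 : Tendsto (fun n : ℕ =>
      ((n:ℝ) * t * Real.log ((n:ℝ) * t)) / ((n:ℝ) * Real.log n)) atTop (nhds t) := by
    have base : Tendsto (fun n : ℕ => t + t * Real.log t * (Real.log n)⁻¹) atTop
        (nhds (t + t * Real.log t * 0)) := tendsto_const_nhds.add (invlogn.const_mul _)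
    rw [mul_zero, add_zero] at base
    apply base.congr'
    filter_upwards [eventually_ge_atTop (2:ℕ)] with n hn
    have hn1 : (1:ℝ) < n := by exact_mod_cast Nat.lt_of_lt_of_le one_lt_two hn
    have hn0 : (0:ℝ) < n := lt_trans one_pos hn1
    have hlogn : Real.log n ≠ 0 := ne_of_gt (Real.log_pos hn1)
    rw [Real.log_mul (ne_of_gt hn0) (ne_of_gt ht)]
    field_simp
  have hprod := comp1.mul factor2
  have efin : (∫ x, R x) / Real.pi * t = t / Real.pi * ∫ x, R x := by ring
  rw [efin] at hprod
  apply hprod.congr'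
  filter_upwards [eventually_ge_atTop (2:ℕ), hseq.eventually (eventually_gt_atTop (1:ℝ))]
    with n hn hnt
  have hn1 : (1:ℝ) < n := by exact_mod_cast Nat.lt_of_lt_of_le one_lt_two hn
  have hn0 : (0:ℝ) < n := lt_trans one_pos hn1
  have hlogn : (0:ℝ) < Real.log n := Real.log_pos hn1
  have hb : (n:ℝ) * t * Real.log ((n:ℝ) * t) ≠ 0 :=
    ne_of_gt (mul_pos (lt_trans one_pos hnt) (Real.log_pos hnt))
  show (∫ s in (0:ℝ)..((n:ℝ)*t), ∫ u in (0:ℝ)..((n:ℝ)*t), ∫ ω, R (B s ω - B u ω) ∂P)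
        / ((n:ℝ) * t * Real.log ((n:ℝ) * t))
      * (((n:ℝ) * t * Real.log ((n:ℝ) * t)) / ((n:ℝ) * Real.log n))
    = ((n:ℝ) * Real.log n)⁻¹
      * ∫ s in (0:ℝ)..((n:ℝ)*t), ∫ u in (0:ℝ)..((n:ℝ)*t), ∫ ω, R (B s ω - B u ω) ∂P
  set A := ∫ s in (0:ℝ)..((n:ℝ)*t), ∫ u in (0:ℝ)..((n:ℝ)*t), ∫ ω, R (B s ω - B u ω) ∂P
  rw [div_mul_div_comm, mul_comm A ((n:ℝ) * t * Real.log ((n:ℝ) * t)),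
    mul_div_mul_left _ _ hb, div_eq_mul_inv, mul_comm]
end

section
/- Let R: ℝ → ℝ be bounded with compact support, B a standard 1-dimensional Brownian motion, and X_n(t) = n^{−3/4} ∫₀^{nt} V(B_s) ds an additive functional whose second moment satisfies E[(X_n(t)−X_n(s))²] = n^{−3/2} ∫_{[0,n(t−s)]²} E[R(B_{u₁}−B_{u₂})] du₁ du₂. Then there is a constant C independent of n, s, t such that E[(X_n(t)−X_n(s))²] ≤ C (t−s)^{3/2} for all 0 ≤ s ≤ t ≤ 1. -/
open MeasureTheory ProbabilityTheory

-- x^(-1/2) = 0 for x ≤ 0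
lemma rpow_neg_half_of_nonpos {x : ℝ} (hx : x ≤ 0) : x ^ (-(1:ℝ)/2) = 0 := by
  rcases lt_or_eq_of_le hx with h | h
  · rw [Real.rpow_def_of_neg h]
    have : Real.cos (-(1:ℝ)/2 * Real.pi) = 0 := by
      rw [show (-(1:ℝ)/2 * Real.pi) = -(Real.pi/2) by ring, Real.cos_neg, Real.cos_pi_div_two]
    rw [this, mul_zero]
  · rw [h, Real.zero_rpow (by norm_num)]

lemma rpow_half_of_nonpos {x : ℝ} (hx : x ≤ 0) : x ^ ((1:ℝ)/2) = 0 := by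
  rcases lt_or_eq_of_le hx with h | h
  · rw [Real.rpow_def_of_neg h]
    have : Real.cos ((1:ℝ)/2 * Real.pi) = 0 := by
      rw [show ((1:ℝ)/2 * Real.pi) = Real.pi/2 by ring, Real.cos_pi_div_two]
    rw [this, mul_zero]
  · rw [h, Real.zero_rpow (by norm_num)]

lemma det_aux {T c : ℝ} (hc0 : 0 ≤ c) (hcT : c ≤ T) :
    IntegrableOn (fun u => |u - c| ^ (-(1:ℝ)/2)) (Set.Ioc 0 T) volume ∧
    ∫ u in Set.Ioc (0:ℝ) T, |u - c| ^ (-(1:ℝ)/2) ≤ 4 * T ^ ((1:ℝ)/2) := by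
  have hT : (0:ℝ) ≤ T := hc0.trans hcT
  set g : ℝ → ℝ := fun u => (u - c) ^ (-(1:ℝ)/2) + (c - u) ^ (-(1:ℝ)/2) with hg
  have hg_eq : ∀ u : ℝ, u ≠ c → |u - c| ^ (-(1:ℝ)/2) = g u := by
    intro u hu
    simp only [hg]
    rcases lt_or_gt_of_ne hu with h | h
    · rw [abs_of_neg (by linarith), neg_sub,
        rpow_neg_half_of_nonpos (by linarith : u - c ≤ 0), zero_add]
    · rw [abs_of_pos (by linarith),
        rpow_neg_half_of_nonpos (by linarith : c - u ≤ 0), add_zero]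
  have hae : ∀ᵐ u : ℝ ∂volume, u ≠ c := by
    rw [ae_iff]
    simp only [ne_eq, not_not, Set.setOf_eq_eq_singleton]
    exact measure_singleton c
  have haeq : (fun u => |u - c| ^ (-(1:ℝ)/2)) =ᵐ[volume.restrict (Set.Ioc 0 T)] g :=
    ae_restrict_of_ae (hae.mono fun u hu => hg_eq u hu)
  have hi1 : IntervalIntegrable (fun u : ℝ => (u - c) ^ (-(1:ℝ)/2)) volume 0 T := by
    have := (intervalIntegral.intervalIntegrable_rpow' (a := -c) (b := T - c)
      (r := -(1:ℝ)/2) (by norm_num)).comp_sub_right c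
    simpa using this
  have hi2 : IntervalIntegrable (fun u : ℝ => (c - u) ^ (-(1:ℝ)/2)) volume 0 T := by
    have := (intervalIntegral.intervalIntegrable_rpow' (a := c) (b := c - T)
      (r := -(1:ℝ)/2) (by norm_num)).comp_sub_left c
    simpa using this
  have hig : IntegrableOn g (Set.Ioc 0 T) volume :=
    (intervalIntegrable_iff_integrableOn_Ioc_of_le hT).mp (hi1.add hi2)
  refine ⟨hig.congr haeq.symm, ?_⟩
  have h1 : (∫ u in (0:ℝ)..T, (u - c) ^ (-(1:ℝ)/2)) ≤ 2 * T ^ ((1:ℝ)/2) := by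
    rw [intervalIntegral.integral_comp_sub_right (fun x : ℝ => x ^ (-(1:ℝ)/2)) c]
    rw [integral_rpow (Or.inl (by norm_num))]
    rw [show (-(1:ℝ)/2 + 1) = 1/2 by norm_num]
    rw [show ((0:ℝ) - c) = -c by ring, rpow_half_of_nonpos (by linarith : -c ≤ 0)]
    rw [sub_zero, div_eq_mul_inv, show ((1:ℝ)/2)⁻¹ = 2 by norm_num]
    have : (T - c) ^ ((1:ℝ)/2) ≤ T ^ ((1:ℝ)/2) :=
      Real.rpow_le_rpow (by linarith) (by linarith) (by norm_num)
    linarith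
  have h2 : (∫ u in (0:ℝ)..T, (c - u) ^ (-(1:ℝ)/2)) ≤ 2 * T ^ ((1:ℝ)/2) := by
    rw [intervalIntegral.integral_comp_sub_left (fun x : ℝ => x ^ (-(1:ℝ)/2)) c]
    rw [integral_rpow (Or.inl (by norm_num))]
    rw [show (-(1:ℝ)/2 + 1) = 1/2 by norm_num]
    rw [rpow_half_of_nonpos (by linarith : c - T ≤ 0), sub_zero]
    rw [sub_zero, div_eq_mul_inv, show ((1:ℝ)/2)⁻¹ = 2 by norm_num]
    have : c ^ ((1:ℝ)/2) ≤ T ^ ((1:ℝ)/2) :=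
      Real.rpow_le_rpow hc0 hcT (by norm_num)
    linarith
  calc ∫ u in Set.Ioc (0:ℝ) T, |u - c| ^ (-(1:ℝ)/2)
      = ∫ u in Set.Ioc (0:ℝ) T, g u := integral_congr_ae haeq
    _ = ∫ u in (0:ℝ)..T, g u := (intervalIntegral.integral_of_le hT).symm
    _ = (∫ u in (0:ℝ)..T, (u - c) ^ (-(1:ℝ)/2)) + ∫ u in (0:ℝ)..T, (c - u) ^ (-(1:ℝ)/2) :=
        intervalIntegral.integral_add hi1 hi2
    _ ≤ 4 * T ^ ((1:ℝ)/2) := by linarith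

lemma int_R {d : ℕ} (R : EuclideanSpace ℝ (Fin d) → ℝ) (hRmeas : Measurable R)
    (hRbdd : ∃ K, ∀ x, |R x| ≤ K) (hRsupp : HasCompactSupport R) :
    Integrable R (volume : Measure (EuclideanSpace ℝ (Fin d))) := by
  obtain ⟨K, hK⟩ := hRbdd
  have hind : R = (tsupport R).indicator R :=
    (Set.indicator_eq_self.mpr (subset_tsupport R)).symm
  rw [hind]
  rw [integrable_indicator_iff (isClosed_tsupport R).measurableSet]
  exact Measure.integrableOn_of_bounded hRsupp.measure_lt_top.ne
    hRmeas.aestronglyMeasurable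
    (Filter.Eventually.of_forall fun x => by simpa [Real.norm_eq_abs] using hK x)

lemma heatKernel_one_le {u : ℝ} (hu : 0 < u) (x : EuclideanSpace ℝ (Fin 1)) :
    heatKernel 1 u x ≤ (2 * Real.pi) ^ (-(1:ℝ)/2) * u ^ (-(1:ℝ)/2) := by
  have h2pi : (0:ℝ) ≤ 2 * Real.pi := by positivity
  have hbase : (0:ℝ) ≤ 2 * Real.pi * u := by positivity
  have hexp : Real.exp (-‖x‖ ^ 2 / (2 * u)) ≤ 1 := by
    rw [Real.exp_le_one_iff]
    have : (0:ℝ) ≤ ‖x‖ ^ 2 / (2 * u) := by positivity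
    rw [neg_div]; linarith
  have : heatKernel 1 u x ≤ (2 * Real.pi * u) ^ (-(1:ℝ)/2) := by
    unfold heatKernel
    calc (2 * Real.pi * u) ^ (-((1:ℕ):ℝ) / 2) * Real.exp (-‖x‖ ^ 2 / (2 * u))
        ≤ (2 * Real.pi * u) ^ (-((1:ℕ):ℝ) / 2) * 1 :=
          mul_le_mul_of_nonneg_left hexp (Real.rpow_nonneg hbase _)
      _ = (2 * Real.pi * u) ^ (-(1:ℝ)/2) := by norm_num
  rwa [Real.mul_rpow h2pi hu.le] at this

lemma heatKernel_nonneg {u : ℝ} (hu : 0 < u) (x : EuclideanSpace ℝ (Fin 1)) :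
    0 ≤ heatKernel 1 u x := by
  unfold heatKernel
  have : (0:ℝ) ≤ 2 * Real.pi * u := by positivity
  positivity

lemma prob_lt {Ω : Type*} [MeasurableSpace Ω] (P : Measure Ω) [IsProbabilityMeasure P]
    (B : ℝ → Ω → EuclideanSpace ℝ (Fin 1)) (hB : IsStdBM 1 P B)
    (R : EuclideanSpace ℝ (Fin 1) → ℝ) (hRmeas : Measurable R) (hRint : Integrable R)
    {a b : ℝ} (ha : 0 ≤ a) (hab : a < b) :
    |∫ ω, R (B b ω - B a ω) ∂P| ≤
      (2 * Real.pi) ^ (-(1:ℝ)/2) * (∫ x, |R x|) * (b - a) ^ (-(1:ℝ)/2) := by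
  have hu : (0:ℝ) < b - a := by linarith
  have hmeas : Measurable fun ω => B b ω - B a ω := (hB.1 b).sub (hB.1 a)
  have hmap := hB.2.2.1 a b ha hab
  have hkmeas : Measurable fun x : EuclideanSpace ℝ (Fin 1) =>
      (heatKernel 1 (b - a) x).toNNReal := by
    apply Measurable.real_toNNReal
    unfold heatKernel
    fun_prop
  have h1 : ∫ ω, R (B b ω - B a ω) ∂P =
      ∫ x, (heatKernel 1 (b - a) x).toNNReal • R x := by
    rw [← integral_map hmeas.aemeasurable hRmeas.aestronglyMeasurable, hmap]
    exact integral_withDensity_eq_integral_smul hkmeas R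
  rw [h1]
  have hptwise : ∀ x, |(heatKernel 1 (b - a) x).toNNReal • R x| ≤
      ((2 * Real.pi) ^ (-(1:ℝ)/2) * (b - a) ^ (-(1:ℝ)/2)) * |R x| := by
    intro x
    have hnn := heatKernel_nonneg hu x
    have hle := heatKernel_one_le hu x
    rw [NNReal.smul_def, smul_eq_mul, abs_mul, Real.coe_toNNReal _ hnn,
      abs_of_nonneg hnn]
    exact mul_le_mul_of_nonneg_right hle (abs_nonneg _)
  calc |∫ x, (heatKernel 1 (b - a) x).toNNReal • R x|
      ≤ ∫ x, |(heatKernel 1 (b - a) x).toNNReal • R x| := by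
        simpa [Real.norm_eq_abs] using
          norm_integral_le_integral_norm (fun x => (heatKernel 1 (b - a) x).toNNReal • R x)
    _ ≤ ∫ x, ((2 * Real.pi) ^ (-(1:ℝ)/2) * (b - a) ^ (-(1:ℝ)/2)) * |R x| := by
        apply integral_mono_of_nonneg
        · exact Filter.Eventually.of_forall fun x => abs_nonneg _
        · exact hRint.abs.const_mul _
        · exact Filter.Eventually.of_forall hptwise
    _ = (2 * Real.pi) ^ (-(1:ℝ)/2) * (∫ x, |R x|) * (b - a) ^ (-(1:ℝ)/2) := by
        rw [integral_const_mul]; ring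

lemma prob_bound {Ω : Type*} [MeasurableSpace Ω] (P : Measure Ω) [IsProbabilityMeasure P]
    (B : ℝ → Ω → EuclideanSpace ℝ (Fin 1)) (hB : IsStdBM 1 P B)
    (R : EuclideanSpace ℝ (Fin 1) → ℝ) (hRmeas : Measurable R) (hRint : Integrable R)
    {a b : ℝ} (ha : 0 ≤ a) (hb : 0 ≤ b) (hab : a ≠ b) :
    |∫ ω, R (B a ω - B b ω) ∂P| ≤
      (2 * Real.pi) ^ (-(1:ℝ)/2) * (∫ x, |R x|) * |a - b| ^ (-(1:ℝ)/2) := by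
  rcases lt_or_gt_of_ne hab with h | h
  · -- a < b : B a - B b = -(B b - B a)
    have hR' : Measurable fun x : EuclideanSpace ℝ (Fin 1) => R (-x) :=
      hRmeas.comp measurable_neg
    have hR'int : Integrable (fun x : EuclideanSpace ℝ (Fin 1) => R (-x)) volume := by
      have hmap : Measure.map Neg.neg (volume : Measure (EuclideanSpace ℝ (Fin 1))) = volume :=
        Measure.map_neg_eq_self volume
      have := (hmap.symm ▸ hRint :
        Integrable R (Measure.map Neg.neg (volume : Measure (EuclideanSpace ℝ (Fin 1)))))
      simpa [Function.comp_def] using this.comp_measurable measurable_neg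
    have heq : (fun ω => R (B a ω - B b ω)) = fun ω => R (-(B b ω - B a ω)) := by
      funext ω; rw [neg_sub]
    have := prob_lt P B hB _ hR' hR'int ha h
    rw [← heq, integral_neg_eq_self (fun x => |R x|) volume] at this
    rwa [abs_of_neg (show a - b < 0 by linarith), neg_sub]
  · have := prob_lt P B hB R hRmeas hRint hb h
    rwa [abs_of_pos (by linarith : (0:ℝ) < a - b)]

/-- Tightness second-moment estimate in dimension one: if
`E[(X_n(t) - X_n(s))²] = n^{-3/2} ∫_{[0,n(t-s)]²} E[R(B_{u₁} - B_{u₂})] du₁ du₂` with `R`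
bounded of compact support, then `E[(X_n(t) - X_n(s))²] ≤ C (t-s)^{3/2}` uniformly in `n`. -/
theorem stmt16 {Ω : Type*} [MeasurableSpace Ω] (P : Measure Ω) [IsProbabilityMeasure P]
    (B : ℝ → Ω → EuclideanSpace ℝ (Fin 1)) (hB : IsStdBM 1 P B)
    (R : EuclideanSpace ℝ (Fin 1) → ℝ) (hRmeas : Measurable R)
    (hRbdd : ∃ K, ∀ x, |R x| ≤ K) (hRsupp : HasCompactSupport R)
    (X : ℕ → ℝ → Ω → ℝ)
    (hX : ∀ n : ℕ, 1 ≤ n → ∀ s t : ℝ, 0 ≤ s → s ≤ t → t ≤ 1 →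
      (∫ ω, (X n t ω - X n s ω) ^ 2 ∂P)
        = (n : ℝ) ^ (-(3 : ℝ) / 2) *
          ∫ u₁ in (0:ℝ)..((n : ℝ) * (t - s)), ∫ u₂ in (0:ℝ)..((n : ℝ) * (t - s)),
            ∫ ω, R (B u₁ ω - B u₂ ω) ∂P) :
    ∃ C : ℝ, ∀ n : ℕ, 1 ≤ n → ∀ s t : ℝ, 0 ≤ s → s ≤ t → t ≤ 1 →
      (∫ ω, (X n t ω - X n s ω) ^ 2 ∂P) ≤ C * (t - s) ^ ((3 : ℝ) / 2) := by
  have hRint : Integrable R volume := int_R R hRmeas hRbdd hRsupp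
  set CR : ℝ := ∫ x, |R x| with hCR
  have hCR0 : 0 ≤ CR := integral_nonneg fun x => abs_nonneg _
  set c₁ : ℝ := (2 * Real.pi) ^ (-(1:ℝ)/2) * CR with hc₁
  have hc₁0 : 0 ≤ c₁ := mul_nonneg (Real.rpow_nonneg (by positivity) _) hCR0
  refine ⟨4 * c₁, fun n hn s t hs hst ht1 => ?_⟩
  rw [hX n hn s t hs hst ht1]
  set T : ℝ := (n : ℝ) * (t - s) with hTdef
  have hT : (0:ℝ) ≤ T := mul_nonneg (Nat.cast_nonneg n) (by linarith)
  simp only [intervalIntegral.integral_of_le hT]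
  set F : ℝ → ℝ := fun u₁ => ∫ u₂ in Set.Ioc (0:ℝ) T, ∫ ω, R (B u₁ ω - B u₂ ω) ∂P with hF
  -- pointwise bound on F
  have hFb : ∀ u₁ ∈ Set.Ioc (0:ℝ) T, |F u₁| ≤ c₁ * (4 * T ^ ((1:ℝ)/2)) := by
    intro u₁ hu₁
    obtain ⟨hint, hval⟩ := det_aux (c := u₁) hu₁.1.le hu₁.2
    have step2 : (∫ u₂ in Set.Ioc (0:ℝ) T, |∫ ω, R (B u₁ ω - B u₂ ω) ∂P|)
        ≤ ∫ u₂ in Set.Ioc (0:ℝ) T, c₁ * |u₂ - u₁| ^ (-(1:ℝ)/2) := by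
      apply integral_mono_of_nonneg
      · exact Filter.Eventually.of_forall fun u₂ => abs_nonneg _
      · exact hint.const_mul _
      · have hne : ∀ᵐ u₂ : ℝ ∂volume, u₂ ≠ u₁ := by
          rw [ae_iff]
          simp only [ne_eq, not_not, Set.setOf_eq_eq_singleton]
          exact measure_singleton u₁
        filter_upwards [ae_restrict_mem measurableSet_Ioc, ae_restrict_of_ae hne]
          with u₂ hmem hne2
        have := prob_bound P B hB R hRmeas hRint
          (a := u₁) (b := u₂) hu₁.1.le hmem.1.le (fun h => hne2 h.symm)
        rw [abs_sub_comm u₁ u₂] at this; exact this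
    calc |F u₁| ≤ ∫ u₂ in Set.Ioc (0:ℝ) T, |∫ ω, R (B u₁ ω - B u₂ ω) ∂P| := by
          simpa [Real.norm_eq_abs] using norm_integral_le_integral_norm
            (μ := volume.restrict (Set.Ioc (0:ℝ) T))
            (fun u₂ => ∫ ω, R (B u₁ ω - B u₂ ω) ∂P)
      _ ≤ ∫ u₂ in Set.Ioc (0:ℝ) T, c₁ * |u₂ - u₁| ^ (-(1:ℝ)/2) := step2
      _ = c₁ * ∫ u₂ in Set.Ioc (0:ℝ) T, |u₂ - u₁| ^ (-(1:ℝ)/2) := integral_const_mul _ _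
      _ ≤ c₁ * (4 * T ^ ((1:ℝ)/2)) := mul_le_mul_of_nonneg_left hval hc₁0
  -- bound on the outer integral
  have hD : (∫ u₁ in Set.Ioc (0:ℝ) T, F u₁) ≤ c₁ * (4 * T ^ ((1:ℝ)/2)) * T := by
    calc (∫ u₁ in Set.Ioc (0:ℝ) T, F u₁) ≤ |∫ u₁ in Set.Ioc (0:ℝ) T, F u₁| := le_abs_self _
      _ ≤ ∫ u₁ in Set.Ioc (0:ℝ) T, |F u₁| := by
          simpa [Real.norm_eq_abs] using norm_integral_le_integral_norm
            (μ := volume.restrict (Set.Ioc (0:ℝ) T)) F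
      _ ≤ ∫ _u₁ in Set.Ioc (0:ℝ) T, c₁ * (4 * T ^ ((1:ℝ)/2)) := by
          apply integral_mono_of_nonneg
          · exact Filter.Eventually.of_forall fun u₁ => abs_nonneg _
          · exact integrableOn_const measure_Ioc_lt_top.ne
          · filter_upwards [ae_restrict_mem measurableSet_Ioc] with u₁ hmem
            exact hFb u₁ hmem
      _ = c₁ * (4 * T ^ ((1:ℝ)/2)) * T := by
          rw [setIntegral_const, smul_eq_mul, Real.volume_real_Ioc_of_le hT,
            sub_zero, mul_comm]
  have hTpow : c₁ * (4 * T ^ ((1:ℝ)/2)) * T = 4 * c₁ * T ^ ((3:ℝ)/2) := by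
    rcases eq_or_lt_of_le hT with h | h
    · rw [← h, Real.zero_rpow (by norm_num), Real.zero_rpow (by norm_num)]; ring
    · have : T ^ ((1:ℝ)/2) * T = T ^ ((3:ℝ)/2) := by
        nth_rewrite 2 [← Real.rpow_one T]
        rw [← Real.rpow_add h]; norm_num
      calc c₁ * (4 * T ^ ((1:ℝ)/2)) * T = 4 * c₁ * (T ^ ((1:ℝ)/2) * T) := by ring
        _ = 4 * c₁ * T ^ ((3:ℝ)/2) := by rw [this]
  have hn0 : (0:ℝ) < (n:ℝ) := by exact_mod_cast Nat.lt_of_lt_of_le Nat.zero_lt_one hn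
  have hfinal : (n : ℝ) ^ (-(3:ℝ)/2) * (4 * c₁ * T ^ ((3:ℝ)/2))
      = 4 * c₁ * (t - s) ^ ((3:ℝ)/2) := by
    rw [hTdef, Real.mul_rpow (Nat.cast_nonneg n) (by linarith : (0:ℝ) ≤ t - s)]
    rw [show (n : ℝ) ^ (-(3:ℝ)/2) * (4 * c₁ * ((n:ℝ) ^ ((3:ℝ)/2) * (t - s) ^ ((3:ℝ)/2)))
        = ((n : ℝ) ^ (-(3:ℝ)/2) * (n:ℝ) ^ ((3:ℝ)/2)) * (4 * c₁ * (t - s) ^ ((3:ℝ)/2)) by ring]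
    rw [← Real.rpow_add hn0]
    norm_num
  calc (n : ℝ) ^ (-(3:ℝ)/2) * ∫ u₁ in Set.Ioc (0:ℝ) T, F u₁
      ≤ (n : ℝ) ^ (-(3:ℝ)/2) * (4 * c₁ * T ^ ((3:ℝ)/2)) := by
        apply mul_le_mul_of_nonneg_left _ (Real.rpow_nonneg (Nat.cast_nonneg n) _)
        rw [← hTpow]; exact hD
    _ = 4 * c₁ * (t - s) ^ ((3:ℝ)/2) := hfinal
end
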